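/- arXiv:2403.14900 — 4 statements merged into one kernel-verified Lean document; each statement's English description precedes it below -/
import Mathlib

section
/- Let E and C be abelian groups, let n be a positive integer, and let 0 → H → C →f→ E → 0 be a short exact sequence of abelian groups with H finite of exponent dividing n (i.e., n·h = 0 for all h ∈ H). Suppose E is n-divisible and multiplication by n on E is surjective. Let C' = {(e, c) ∈ E × C : n·e = f(c)} with map f'(e,c) = e. Then for every e ∈ E there exists a unique x ∈ n·C' with f'(x) = e, and the assignment e ↦ x defines a group homomorphism s : E → C' with f' ∘ s = id. Hence the pulled-back extension 0 → H → C' → E → 0 splits. -/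
/-- The fiber product `C' = {(e, c) : n•e = f c} ≤ E × C`. -/
def pullbackSubgroup {E C : Type*} [AddCommGroup E] [AddCommGroup C] (f : C →+ E) (n : ℕ) :
    AddSubgroup (E × C) where
  carrier := {p | n • p.1 = f p.2}
  zero_mem' := by simp
  add_mem' := by
    intro a b ha hb
    simp only [Set.mem_setOf_eq, Prod.fst_add, Prod.snd_add, smul_add, map_add] at *
    rw [ha, hb]
  neg_mem' := by
    intro a ha
    simp only [Set.mem_setOf_eq, Prod.fst_neg, Prod.snd_neg, smul_neg, map_neg] at *
    rw [ha]

lemma pullback_mem_iff {E C : Type*} [AddCommGroup E] [AddCommGroup C] (f : C →+ E) (n : ℕ)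
    (p : E × C) : p ∈ pullbackSubgroup f n ↔ n • p.1 = f p.2 := Iff.rfl

lemma pullback_key {E C : Type*} [AddCommGroup E] [AddCommGroup C]
    (f : C →+ E) (hf : Function.Surjective f) (n : ℕ)
    (hexp : ∀ h ∈ f.ker, n • h = 0)
    (hdiv : ∀ e : E, ∃ e' : E, n • e' = e) :
    ∀ e : E, ∃! x : E × C, (∃ y ∈ pullbackSubgroup f n, x = n • y) ∧ x.1 = e := by
  intro e
  obtain ⟨e', he'⟩ := hdiv e
  obtain ⟨c, hc⟩ := hf (n • e')
  have hmem : (e', c) ∈ pullbackSubgroup f n := by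
    rw [pullback_mem_iff]; exact hc.symm
  refine ⟨n • (e', c), ⟨⟨(e', c), hmem, rfl⟩, by simp [he']⟩, ?_⟩
  rintro x ⟨⟨y, hy, rfl⟩, hx1⟩
  have hz : y - (e', c) ∈ pullbackSubgroup f n := sub_mem hy hmem
  rw [pullback_mem_iff] at hz
  have h1 : n • (y - (e', c)).1 = 0 := by
    have : n • y.1 = e := hx1
    simp only [Prod.fst_sub, smul_sub, this, he', sub_self]
  have h2 : (y - (e', c)).2 ∈ f.ker := by
    rw [AddMonoidHom.mem_ker, ← hz, h1]
  have h3 : n • (y - (e', c)) = 0 := by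
    rw [Prod.ext_iff]
    constructor
    · simpa using h1
    · simpa using hexp _ h2
  rw [← sub_eq_zero, ← smul_sub]
  exact h3

/-- Given a short exact sequence `0 → H → C → E → 0` of abelian groups with `H = ker f`
finite of exponent dividing `n`, and `E` `n`-divisible, the pulled-back extension
`C' = E ×_E C` (along multiplication by `n`) splits: for every `e : E` there is a unique
`x ∈ n·C'` with first coordinate `e`, and `e ↦ x` is a homomorphic section. -/
theorem pullback_extension_splits {E C : Type*} [AddCommGroup E] [AddCommGroup C]
    (f : C →+ E) (hf : Function.Surjective f) (n : ℕ) (hn : 0 < n)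
    (hfin : (f.ker : Set C).Finite) (hexp : ∀ h ∈ f.ker, n • h = 0)
    (hdiv : ∀ e : E, ∃ e' : E, n • e' = e) :
    (∀ e : E, ∃! x : E × C, (∃ y ∈ pullbackSubgroup f n, x = n • y) ∧ x.1 = e) ∧
    ∃ s : E →+ (pullbackSubgroup f n), ∀ e : E,
      ((s e : E × C).1 = e ∧ ∃ y ∈ pullbackSubgroup f n, (s e : E × C) = n • y) := by
  have key := pullback_key f hf n hexp hdiv
  refine ⟨key, ?_⟩
  have spec : ∀ e : E, (∃ y ∈ pullbackSubgroup f n, (key e).choose = n • y) ∧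
      (key e).choose.1 = e := fun e => (key e).choose_spec.1
  have mem : ∀ e : E, (key e).choose ∈ pullbackSubgroup f n := by
    intro e
    obtain ⟨⟨y, hy, hxy⟩, _⟩ := spec e
    rw [hxy]
    exact AddSubgroup.nsmul_mem _ hy n
  refine ⟨{ toFun := fun e => ⟨(key e).choose, mem e⟩,
            map_zero' := ?_, map_add' := ?_ }, ?_⟩
  · have := (key 0).choose_spec.2 (0 : E × C)
      ⟨⟨0, zero_mem _, by simp⟩, rfl⟩
    exact Subtype.ext this.symm
  · intro a b
    have ha := spec a; have hb := spec b
    obtain ⟨⟨ya, hya, hxa⟩, ha1⟩ := ha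
    obtain ⟨⟨yb, hyb, hxb⟩, hb1⟩ := hb
    have := (key (a + b)).choose_spec.2 ((key a).choose + (key b).choose)
      ⟨⟨ya + yb, add_mem hya hyb, by rw [hxa, hxb, smul_add]⟩,
       by simp only [Prod.fst_add]; rw [ha1, hb1]⟩
    exact Subtype.ext this.symm
  · intro e
    exact ⟨(spec e).2, (spec e).1⟩
end

section
/- Let F be a differential field of characteristic zero with derivation δ, f ∈ F(x₀,...,x_{m-1}), and let a be an element of a differential field extension with δ^m(a) = f(a, δa, ..., δ^{m-1}a), such that a, δa, ..., δ^{m-1}a are algebraically independent over F. Suppose h ∈ F(x₀,...,x_{m-1}) is nonzero, e ∈ F, and k is a nonzero integer satisfying the identity (k·x₀ − e)·h = Σ_{i=0}^{m-2} (∂h/∂xᵢ)·x_{i+1} + (∂h/∂x_{m-1})·f + δ^F(h) in F(x₀,...,x_{m-1}). Let u be a nonzero solution of δ(u)/u = a. Then w₂ := u^k / h(ā) satisfies δ(w₂)/w₂ = e, where ā = (a, δa, ..., δ^{m-1}a). -/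
open MvPolynomial

/-- The rational function field `F(x₀,…,x_{m-1})`. -/
abbrev RatFuncField (F : Type*) [Field F] (m : ℕ) : Type _ :=
  FractionRing (MvPolynomial (Fin m) F)

/-- Coefficient-wise application of a derivation: `δ^F(P) = P^δ`. -/
noncomputable def coeffDeriv {F : Type*} [CommSemiring F] {m : ℕ} (δF : F → F)
    (p : MvPolynomial (Fin m) F) : MvPolynomial (Fin m) F :=
  p.support.sum fun mo => MvPolynomial.monomial mo (δF (p.coeff mo))

section Aux
variable {F : Type*} [CommSemiring F] {m : ℕ}

theorem coeff_coeffDeriv (δF : F → F) (h0 : δF 0 = 0) (p : MvPolynomial (Fin m) F)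
    (n : Fin m →₀ ℕ) : (coeffDeriv δF p).coeff n = δF (p.coeff n) := by
  classical
  unfold coeffDeriv
  rw [MvPolynomial.coeff_sum]
  simp only [coeff_monomial]
  rw [Finset.sum_ite_eq' p.support n (fun mo => δF (p.coeff mo))]
  by_cases hn : n ∈ p.support
  · simp [hn]
  · simp [hn, MvPolynomial.notMem_support_iff.mp hn, h0]

theorem coeffDeriv_C (δF : F → F) (h0 : δF 0 = 0) (c : F) :
    coeffDeriv (m := m) δF (C c) = C (δF c) := by
  ext n
  rw [coeff_coeffDeriv δF h0]
  classical
  simp only [coeff_C]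
  split <;> simp [h0]

theorem coeffDeriv_add (δF : F →+ F) (p q : MvPolynomial (Fin m) F) :
    coeffDeriv δF (p + q) = coeffDeriv δF p + coeffDeriv δF q := by
  ext n
  simp [coeff_coeffDeriv (⇑δF) δF.map_zero, map_add]

theorem coeffDeriv_mul_X (δF : F → F) (h0 : δF 0 = 0) (p : MvPolynomial (Fin m) F)
    (j : Fin m) : coeffDeriv δF (p * X j) = coeffDeriv δF p * X j := by
  classical
  ext n
  rw [coeff_coeffDeriv δF h0, coeff_mul_X', coeff_mul_X', coeff_coeffDeriv δF h0]
  split <;> simp [h0]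

end Aux

section Chain
variable {F U : Type*} [Field F] [Field U] [Algebra F U]

theorem chainRule (δF : Derivation ℤ F F) (δU : Derivation ℤ U U)
    (hcompat : ∀ c : F, δU (algebraMap F U c) = algebraMap F U (δF c))
    {m : ℕ} (b : Fin m → U) (P : MvPolynomial (Fin m) F) :
    δU (aeval b P) = (∑ i, aeval b (pderiv i P) * δU (b i)) + aeval b (coeffDeriv (⇑δF) P) := by
  classical
  induction P using MvPolynomial.induction_on with
  | C c =>
    simp [coeffDeriv_C (⇑δF) δF.map_zero, hcompat c, aeval_C]
  | add p q hp hq =>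
    have : (⇑δF : F → F) = ⇑(δF.toLinearMap.toAddMonoidHom) := rfl
    rw [map_add, map_add, hp, hq, this, coeffDeriv_add]
    simp only [map_add, add_mul, Finset.sum_add_distrib]
    ring
  | mul_X p j hp =>
    rw [map_mul, aeval_X, Derivation.leibniz, smul_eq_mul, smul_eq_mul, hp,
      coeffDeriv_mul_X (⇑δF) δF.map_zero]
    have hpd : ∀ i : Fin m, aeval b (pderiv i (p * X j)) * δU (b i)
        = aeval b (pderiv i p) * b j * δU (b i)
          + (if i = j then aeval b p * δU (b j) else 0) := by
      intro i
      rw [pderiv_mul, pderiv_X]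
      by_cases hij : i = j
      · subst hij; simp [Pi.single_eq_same]; ring
      · simp [Pi.single_eq_of_ne (Ne.symm hij), hij]
    have hsum : b j * (∑ i, aeval b (pderiv i p) * δU (b i))
        = ∑ i, aeval b (pderiv i p) * b j * δU (b i) := by
      rw [Finset.mul_sum]; exact Finset.sum_congr rfl fun i _ => by ring
    rw [Finset.sum_congr rfl fun i _ => hpd i, Finset.sum_add_distrib,
      Finset.sum_ite_eq' Finset.univ j fun _ => aeval b p * δU (b j),
      if_pos (Finset.mem_univ j), map_mul, aeval_X, mul_add, hsum]
    ring

end Chain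


set_option maxHeartbeats 1000000
set_option synthInstance.maxHeartbeats 1000000

/-- Forward direction of the product-splitting criterion: if
`(k·x₀ − e)·h = Σ_{i≤m-2} (∂h/∂xᵢ)·x_{i+1} + (∂h/∂x_{m-1})·f + δ^F(h)` holds in
`F(x₀,…,x_{m-1})`, `a` is a generic solution of `δ^m(y) = f(y,…,δ^{m-1}y)`, and
`log_δ(u) = a`, then `w₂ = u^k / h(ā)` satisfies `log_δ(w₂) = e`. -/
theorem productSplitting_forward {F U : Type*} [Field F] [CharZero F] [Field U] [Algebra F U]
    (δF : Derivation ℤ F F) (δU : Derivation ℤ U U)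
    (hcompat : ∀ c : F, δU (algebraMap F U c) = algebraMap F U (δF c))
    (m : ℕ) (hm : 0 < m)
    (Di : Fin m → Derivation ℤ (RatFuncField F m) (RatFuncField F m))
    (hDi : ∀ (i : Fin m) (P : MvPolynomial (Fin m) F),
      Di i (algebraMap (MvPolynomial (Fin m) F) (RatFuncField F m) P)
        = algebraMap (MvPolynomial (Fin m) F) (RatFuncField F m) (pderiv i P))
    (Dδ : Derivation ℤ (RatFuncField F m) (RatFuncField F m))
    (hDδ : ∀ P : MvPolynomial (Fin m) F,
      Dδ (algebraMap (MvPolynomial (Fin m) F) (RatFuncField F m) P)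
        = algebraMap (MvPolynomial (Fin m) F) (RatFuncField F m) (coeffDeriv (⇑δF) P))
    (f h : RatFuncField F m) (hh : h ≠ 0) (e : F) (k : ℤ) (hk : k ≠ 0)
    (hid : ((k : RatFuncField F m) *
        algebraMap (MvPolynomial (Fin m) F) (RatFuncField F m) (X (⟨0, hm⟩ : Fin m)) -
        algebraMap (MvPolynomial (Fin m) F) (RatFuncField F m) (C e)) * h
      = (∑ i : Fin m, if hi : (i : ℕ) + 1 < m then
          Di i h * algebraMap (MvPolynomial (Fin m) F) (RatFuncField F m)
            (X (⟨(i : ℕ) + 1, hi⟩ : Fin m)) else 0)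
        + Di (⟨m - 1, by omega⟩ : Fin m) h * f + Dδ h)
    (a : U)
    (hindep : AlgebraicIndependent F (fun i : Fin m => (⇑δU)^[(i : ℕ)] a))
    (φ : RatFuncField F m →+* U)
    (hφ : ∀ P : MvPolynomial (Fin m) F,
      φ (algebraMap (MvPolynomial (Fin m) F) (RatFuncField F m) P)
        = aeval (fun i : Fin m => (⇑δU)^[(i : ℕ)] a) P)
    (hsol : (⇑δU)^[m] a = φ f)
    (u : U) (hu : u ≠ 0) (hlog : δU u / u = a) :
    δU (u ^ k / φ h) / (u ^ k / φ h) = algebraMap F U e := by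
  classical
  set ι := algebraMap (MvPolynomial (Fin m) F) (RatFuncField F m) with hι
  set b : Fin m → U := fun i : Fin m => (⇑δU)^[(i : ℕ)] a with hb
  have hφinj : Function.Injective φ := φ.injective
  have hφh : φ h ≠ 0 := fun hc => hh (hφinj (by simpa using hc))
  have hEpoly : ∀ P : MvPolynomial (Fin m) F,
      δU (φ (ι P)) = (∑ i, φ (Di i (ι P)) * δU (b i)) + φ (Dδ (ι P)) := by
    intro P
    rw [hφ, hDδ, hφ, chainRule δF δU hcompat b P]
    congr 1
    exact Finset.sum_congr rfl fun i _ => by rw [hDi, hφ]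
  obtain ⟨P, Q, hQ, hPQ⟩ := IsFractionRing.div_surjective (A := MvPolynomial (Fin m) F) h
  have hQ0 : ι Q ≠ 0 := IsFractionRing.to_map_ne_zero_of_mem_nonZeroDivisors hQ
  have hmulPQ : h * ι Q = ι P := by rw [← hPQ, div_mul_cancel₀ _ hQ0]
  have hEh : δU (φ h) = (∑ i, φ (Di i h) * δU (b i)) + φ (Dδ h) := by
    have hQφ : φ (ι Q) ≠ 0 := fun hc => hQ0 (hφinj (by simpa using hc))
    have h1 := hEpoly P
    rw [← hmulPQ] at h1
    have e1 : δU (φ (h * ι Q)) = φ h * δU (φ (ι Q)) + φ (ι Q) * δU (φ h) := by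
      rw [φ.map_mul, Derivation.leibniz, smul_eq_mul, smul_eq_mul]
    have e3 : φ (Dδ (h * ι Q)) = φ h * φ (Dδ (ι Q)) + φ (ι Q) * φ (Dδ h) := by
      rw [Derivation.leibniz, smul_eq_mul, smul_eq_mul, φ.map_add, φ.map_mul, φ.map_mul]
    have hsum2 : ∑ i, φ (Di i (h * ι Q)) * δU (b i)
        = φ h * (∑ i, φ (Di i (ι Q)) * δU (b i))
          + φ (ι Q) * (∑ i, φ (Di i h) * δU (b i)) := by
      rw [Finset.mul_sum, Finset.mul_sum, ← Finset.sum_add_distrib]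
      refine Finset.sum_congr rfl fun i _ => ?_
      rw [Derivation.leibniz, smul_eq_mul, smul_eq_mul, φ.map_add, φ.map_mul, φ.map_mul]
      ring
    have h2 := hEpoly Q
    apply mul_left_cancel₀ hQφ
    rw [e1, hsum2, e3, h2] at h1
    linear_combination h1
  have hbsucc : ∀ i : Fin m, δU (b i) = (⇑δU)^[(i : ℕ) + 1] a :=
    fun i => (Function.iterate_succ_apply' δU i a).symm
  have hterm : ∀ i : Fin m, φ (Di i h) * δU (b i)
      = (if hi : (i : ℕ) + 1 < m then φ (Di i h) * (⇑δU)^[(i : ℕ) + 1] a else 0)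
        + (if i = (⟨m - 1, by omega⟩ : Fin m) then φ (Di i h) * φ f else 0) := by
    intro i
    by_cases hi : (i : ℕ) + 1 < m
    · rw [dif_pos hi, if_neg (by rintro rfl; simp at hi; omega), add_zero, hbsucc]
    · have hiv : (i : ℕ) + 1 = m := by omega
      rw [dif_neg hi, if_pos (Fin.ext (by simp; omega)), zero_add, hbsucc, hiv, hsol]
  have hsplit : ∑ i, φ (Di i h) * δU (b i)
      = (∑ i : Fin m, if hi : (i : ℕ) + 1 < m then
          φ (Di i h) * (⇑δU)^[(i : ℕ) + 1] a else 0)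
        + φ (Di (⟨m - 1, by omega⟩ : Fin m) h) * φ f := by
    rw [Finset.sum_congr rfl fun i _ => hterm i, Finset.sum_add_distrib,
      Finset.sum_ite_eq' Finset.univ (⟨m - 1, by omega⟩ : Fin m)
        (fun i => φ (Di i h) * φ f), if_pos (Finset.mem_univ _)]
  have hφid : ((k : U) * a - algebraMap F U e) * φ h
      = (∑ i : Fin m, if hi : (i : ℕ) + 1 < m then
          φ (Di i h) * (⇑δU)^[(i : ℕ) + 1] a else 0)
        + φ (Di (⟨m - 1, by omega⟩ : Fin m) h) * φ f + φ (Dδ h) := by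
    have hc := congrArg φ hid
    rw [φ.map_mul, φ.map_sub, φ.map_mul, map_intCast φ, hφ, hφ, aeval_X, aeval_C,
      φ.map_add, φ.map_add, φ.map_mul, map_sum φ] at hc
    simp only [apply_dite φ, map_mul, map_zero, hφ, aeval_X] at hc
    convert hc using 4
    rfl
  have hkey : δU (φ h) = ((k : U) * a - algebraMap F U e) * φ h := by
    rw [hEh, hsplit]
    exact hφid.symm
  have hDu : δU u = a * u := by rwa [div_eq_iff hu] at hlog
  have huk : u ^ k ≠ 0 := zpow_ne_zero k hu
  have hδuk : δU (u ^ k) = (k : U) * a * u ^ k := by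
    rw [Derivation.leibniz_zpow, hDu, smul_eq_mul, zsmul_eq_mul]
    have huu : u ^ (k - 1) * u = u ^ k := by
      rw [zpow_sub_one₀ hu]
      field_simp
    calc (k : U) * (u ^ (k - 1) * (a * u)) = (k : U) * a * (u ^ (k - 1) * u) := by ring
      _ = (k : U) * a * u ^ k := by rw [huu]
  have hw : δU (u ^ k / φ h) = algebraMap F U e * (u ^ k / φ h) := by
    rw [Derivation.leibniz_div, hδuk, hkey]
    simp only [smul_eq_mul]
    field_simp
    ring
  rw [hw, mul_div_assoc, div_self (div_ne_zero huk hφh), mul_one]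
end

section
/- Let K be a differential field of characteristic zero with derivation δ, containing an element s with δ(a)/a = s for some transcendental element a over K in a differential field extension. Suppose f, g ∈ K[X] are polynomials with leading coefficients b_n ≠ 0 and d_m ≠ 0 (of degrees n ≥ m respectively), and suppose the rational function f(a)/g(a) is a nonzero constant (i.e., δ(f(a)/g(a)) = 0). If moreover every polynomial identity over K satisfied by a has all coefficients zero (a is transcendental over K), then log_δ(a^{n−m}) = log_δ(d_m/b_n); that is, δ(a^{n−m}·b_n/d_m) = 0. -/
open Polynomial

private noncomputable def Dpoly {K : Type*} [Field K] (δK : Derivation ℤ K K) (s : K)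
    (f : K[X]) : K[X] :=
  C s * (derivative f * X) + f.sum fun i c => monomial i (δK c)

private lemma Dpoly_coeff {K : Type*} [Field K] (δK : Derivation ℤ K K) (s : K)
    (f : K[X]) (j : ℕ) :
    (Dpoly δK s f).coeff j = (j : K) * s * f.coeff j + δK (f.coeff j) := by
  have hsum : (f.sum fun i c => monomial i (δK c)).coeff j = δK (f.coeff j) := by
    rw [coeff_sum]
    simp only [sum_def, coeff_monomial]
    rw [Finset.sum_ite_eq' f.support j fun i => δK (f.coeff i)]
    split_ifs with h
    · rfl
    · simp [notMem_support_iff.mp h]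
  rw [Dpoly, coeff_add, hsum, coeff_C_mul]
  cases j with
  | zero => simp
  | succ k =>
    rw [coeff_mul_X, coeff_derivative]
    push_cast
    ring

private lemma Dpoly_natDegree_le {K : Type*} [Field K] (δK : Derivation ℤ K K) (s : K)
    (f : K[X]) : (Dpoly δK s f).natDegree ≤ f.natDegree := by
  rw [natDegree_le_iff_coeff_eq_zero]
  intro N hN
  rw [Dpoly_coeff, coeff_eq_zero_of_natDegree_lt hN]
  simp

private lemma deriv_aeval {K U : Type*} [Field K] [Field U] [Algebra K U]
    (δK : Derivation ℤ K K) (δU : Derivation ℤ U U)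
    (hcompat : ∀ x : K, δU (algebraMap K U x) = algebraMap K U (δK x))
    (a : U) (s : K) (hs : δU a = algebraMap K U s * a) (f : K[X]) :
    δU (aeval a f) = aeval a (Dpoly δK s f) := by
  induction f using Polynomial.induction_on' with
  | add p q hp hq =>
    have hD : Dpoly δK s (p + q) = Dpoly δK s p + Dpoly δK s q := by
      ext j
      simp only [Dpoly_coeff, coeff_add, map_add]
      ring
    rw [map_add, map_add, hp, hq, hD, map_add]
  | monomial i c =>
    have hD : Dpoly δK s (monomial i c) =
        C s * (monomial (i - 1) (c * i) * X) + monomial i (δK c) := by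
      rw [Dpoly, derivative_monomial, sum_monomial_index]
      simp
    rw [hD]
    cases i with
    | zero =>
      simp [Dpoly, hcompat]
    | succ k =>
      have h1 : δU (aeval a (monomial (k + 1) c)) =
          algebraMap K U (δK c) * a ^ (k + 1) +
            algebraMap K U c * ((k + 1 : ℕ) • (a ^ k • δU a)) := by
        rw [aeval_monomial, Derivation.leibniz, Derivation.leibniz_pow, hcompat]
        simp only [smul_eq_mul, show k + 1 - 1 = k from rfl, show 1 + k - 1 = k by omega]
        ring
      rw [h1, hs]
      simp only [map_add, map_mul, aeval_monomial, aeval_X, Nat.add_sub_cancel,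
        Nat.add_sub_cancel_left, aeval_C, algebraMap_eq, map_natCast, nsmul_eq_mul, smul_eq_mul]
      push_cast
      ring

/-- If `a` is transcendental over the differential field `K`, `log_δ(a) = s ∈ K`, and
`f(a)/g(a)` is a nonzero constant, then `log_δ(a^{n−m}) = log_δ(d_m/b_n)`, i.e.
`δ(a^{n−m}·b_n/d_m) = 0`, where `b_n, d_m` are the leading coefficients. -/
theorem logderiv_power_eq_of_const_ratio {K U : Type*} [Field K] [CharZero K] [Field U]
    [Algebra K U]
    (δK : Derivation ℤ K K) (δU : Derivation ℤ U U)
    (hcompat : ∀ x : K, δU (algebraMap K U x) = algebraMap K U (δK x))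
    (a : U) (htr : Transcendental K a)
    (s : K) (hs : δU a = algebraMap K U s * a)
    (f g : Polynomial K) (hf : f ≠ 0) (hg : g ≠ 0)
    (hdeg : g.natDegree ≤ f.natDegree)
    (hne : Polynomial.aeval a f / Polynomial.aeval a g ≠ 0)
    (hconst : δU (Polynomial.aeval a f / Polynomial.aeval a g) = 0) :
    δU (a ^ (f.natDegree - g.natDegree) * algebraMap K U f.leadingCoeff /
      algebraMap K U g.leadingCoeff) = 0 := by
  set n := f.natDegree with hn
  set m := g.natDegree with hm
  set b := f.leadingCoeff with hb
  set d := g.leadingCoeff with hd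
  have hb0 : b ≠ 0 := leadingCoeff_ne_zero.mpr hf
  have hd0 : d ≠ 0 := leadingCoeff_ne_zero.mpr hg
  have hG : aeval a g ≠ 0 := by
    intro h; apply hne; rw [h, div_zero]
  have hF : aeval a f ≠ 0 := by
    intro h; apply hne; rw [h, zero_div]
  -- from the constant ratio: δF * G = δG * F
  have hcross : δU (aeval a f) * aeval a g = δU (aeval a g) * aeval a f := by
    rw [Derivation.leibniz_div] at hconst
    simp only [smul_eq_mul] at hconst
    rcases mul_eq_zero.mp hconst with h' | h'
    · exact absurd h' (pow_ne_zero _ (inv_ne_zero hG))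
    · linear_combination h'
  -- polynomial identity
  have hpoly : Dpoly δK s f * g = Dpoly δK s g * f := by
    have hz : aeval a (Dpoly δK s f * g - Dpoly δK s g * f) = 0 := by
      rw [map_sub, map_mul, map_mul, ← deriv_aeval δK δU hcompat a s hs,
        ← deriv_aeval δK δU hcompat a s hs]
      linear_combination hcross
    exact sub_eq_zero.mp (transcendental_iff.mp htr _ hz)
  -- key coefficient relation
  have key : ((n : K) * s * b + δK b) * d = ((m : K) * s * d + δK d) * b := by
    have h1 := congrArg (fun p => p.coeff (n + m)) hpoly
    rw [coeff_mul_add_eq_of_natDegree_le (Dpoly_natDegree_le δK s f) le_rfl] at h1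
    rw [show n + m = m + n from add_comm n m,
      coeff_mul_add_eq_of_natDegree_le (Dpoly_natDegree_le δK s g) le_rfl] at h1
    rw [Dpoly_coeff, Dpoly_coeff] at h1
    exact h1
  -- K-level conclusion
  have hK : δK (b / d) + ((n : K) - (m : K)) * s * (b / d) = 0 := by
    rw [Derivation.leibniz_div]
    simp only [smul_sub, smul_smul, smul_eq_mul]
    field_simp
    linear_combination key
  -- derivative of a power
  have hpow : ∀ k : ℕ, δU (a ^ k) = (k : U) * algebraMap K U s * a ^ k := by
    intro k
    induction k with
    | zero => simp
    | succ j ih =>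
      rw [pow_succ, Derivation.leibniz, ih, hs]
      simp only [smul_eq_mul]
      push_cast
      ring
  have hgoal : a ^ (n - m) * algebraMap K U b / algebraMap K U d
      = a ^ (n - m) * algebraMap K U (b / d) := by
    rw [map_div₀]; ring
  have h0 : algebraMap K U (δK (b / d)) +
      algebraMap K U ((n : K) - (m : K)) * algebraMap K U s * algebraMap K U (b / d) = 0 := by
    have := congrArg (algebraMap K U) hK
    rw [map_zero, map_add, map_mul, map_mul] at this
    linear_combination this
  have hcast : ((n - m : ℕ) : U) = algebraMap K U ((n : K) - (m : K)) := by
    rw [← Nat.cast_sub hdeg]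
    simp [map_natCast]
  rw [hgoal, Derivation.leibniz, hpow, hcompat, hcast]
  simp only [smul_eq_mul]
  linear_combination a ^ (n - m) * h0
end

section
/- Let F ⊆ U be fields, a ∈ U, and suppose a is algebraic over a subfield L ⊆ U containing F, with monic minimal polynomial P = X^n + Σ_{i<n} cᵢXⁱ over L. Suppose U carries a derivation δ with δ(L) ⊆ L, and δ(a)/a = w ∈ L. Then for each i < n: n·w·cᵢ − δ(cᵢ) − i·cᵢ·w = 0; consequently, for each i < n with cᵢ ≠ 0, δ(a^{n−i}/cᵢ) = 0, i.e. a^{n−i}/cᵢ is a constant. -/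
open Polynomial


/-- If `a` is algebraic over the differential subfield `L` with minimal polynomial
`P = Xⁿ + Σ cᵢXⁱ` and `log_δ(a) = w ∈ L`, then `n·w·cᵢ − δ(cᵢ) − i·cᵢ·w = 0` for all
`i < n`, and consequently `a^{n−i}/cᵢ` is a constant whenever `cᵢ ≠ 0`. -/
theorem minpoly_coeff_logderiv {L U : Type*} [Field L] [CharZero L] [Field U] [Algebra L U]
    (δL : Derivation ℤ L L) (δU : Derivation ℤ U U)
    (hcompat : ∀ c : L, δU (algebraMap L U c) = algebraMap L U (δL c))
    (a : U) (halg : IsIntegral L a)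
    (w : L) (hw : δU a = algebraMap L U w * a) :
    ∀ i < (minpoly L a).natDegree,
      (((minpoly L a).natDegree : L) * w * (minpoly L a).coeff i
          - δL ((minpoly L a).coeff i) - (i : L) * (minpoly L a).coeff i * w = 0)
      ∧ ((minpoly L a).coeff i ≠ 0 →
          δU (a ^ ((minpoly L a).natDegree - i) /
            algebraMap L U ((minpoly L a).coeff i)) = 0) := by
  set P := minpoly L a with hP
  set n := P.natDegree with hn
  have hmonic : P.Monic := minpoly.monic halg
  -- the coefficient-wise derivative of P
  set Pδ : L[X] := PolynomialModule.equivPolynomial (δL.mapCoeffs P) with hPδ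
  have hPδcoeff : ∀ j, Pδ.coeff j = δL (P.coeff j) := fun j => rfl
  -- main differentiation identity
  have key : (0 : U) = aeval a Pδ + aeval a (derivative P) * (algebraMap L U w * a) := by
    have := Derivation.apply_aeval_eq' δL δU (Algebra.linearMap L U)
      (fun c => (hcompat c).symm) a P
    rw [minpoly.aeval, map_zero, ← PolynomialModule.aeval_equivPolynomial, smul_eq_mul,
      hw] at this
    exact this
  -- the polynomial Q = C(n*w)*P - Pδ - C w * (X * P')
  set Q : L[X] := C ((n : L) * w) * P - Pδ - C w * (X * derivative P) with hQ
  have hXP' : ∀ j : ℕ, (X * derivative P).coeff j = (j : L) * P.coeff j := by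
    intro j
    cases j with
    | zero => simp [coeff_zero_eq_eval_zero]
    | succ k => simp [coeff_X_mul, coeff_derivative, mul_comm, add_comm]
  have hQcoeff : ∀ j, Q.coeff j
      = (n : L) * w * P.coeff j - δL (P.coeff j) - w * ((j : L) * P.coeff j) := by
    intro j
    rw [hQ, coeff_sub, coeff_sub, coeff_C_mul, coeff_C_mul, hPδcoeff, hXP']
  have hQcoeff_hi : ∀ j, n ≤ j → Q.coeff j = 0 := by
    intro j hj
    rcases eq_or_lt_of_le hj with h | h
    · rw [hQcoeff, ← h, show P.coeff n = 1 from hmonic.coeff_natDegree,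
        Derivation.map_one_eq_zero]
      ring
    · have h0 : P.coeff j = 0 := coeff_eq_zero_of_natDegree_lt h
      rw [hQcoeff, h0]
      simp
  have haP : aeval a P = 0 := hP ▸ minpoly.aeval L a
  have haQ : aeval a Q = 0 := by
    simp only [hQ, map_sub, map_mul, aeval_C, aeval_X]
    rw [haP]
    linear_combination key
  have hQ0 : Q = 0 := by
    by_contra h
    have hd : P.degree ≤ Q.degree := minpoly.degree_le_of_ne_zero L a h haQ
    have hnd : n ≤ Q.natDegree := natDegree_le_natDegree hd
    exact Polynomial.leadingCoeff_ne_zero.mpr h (hQcoeff_hi _ hnd)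
  intro i hi
  have part1 : (n : L) * w * P.coeff i - δL (P.coeff i) - (i : L) * P.coeff i * w = 0 := by
    have := hQcoeff i
    rw [hQ0, coeff_zero] at this
    linear_combination -this
  refine ⟨part1, fun hc => ?_⟩
  have hδc : δL (P.coeff i) = ((n : L) - (i : L)) * w * P.coeff i := by
    linear_combination -part1
  have hne : algebraMap L U (P.coeff i) ≠ 0 := by
    simpa using hc
  have hkey : n - i = (n - i - 1) + 1 := by omega
  have hpow : δU (a ^ (n - i))
      = ((n - i : ℕ) : U) * algebraMap L U w * a ^ (n - i) := by
    rw [Derivation.leibniz_pow, hw, smul_eq_mul, nsmul_eq_mul]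
    have hp : a ^ (n - i - 1) * a = a ^ (n - i) := by
      rw [← pow_succ, ← hkey]
    linear_combination (((n - i : ℕ) : U) * algebraMap L U w) * hp
  rw [Derivation.leibniz_div, hpow, hcompat, hδc]
  rw [smul_eq_mul, smul_eq_mul, smul_eq_mul]
  have hcast : ((n - i : ℕ) : U) = (n : U) - (i : U) := by
    push_cast [Nat.cast_sub hi.le]
    ring
  rw [hcast]
  push_cast [map_mul, map_sub]
  ring
end
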